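/- arXiv:2403.07336 — 3 statements merged into one kernel-verified Lean document; each statement's English description precedes it below -/
import Mathlib

section
/- Discrete Sobolev inequality: for any K-periodic v ∈ ℂ^K with K·Δx = L, the sup norm satisfies ‖v‖_∞ ≤ L̂ (‖v‖² + ‖δ⁺ₓ v‖²)^{1/2}, where L̂ = √2 · max{√L, 1/√L}, ‖v‖² = Δx Σ_{k=1}^K |v_k|², and ‖v‖_∞ = max_k |v_k|. -/
theorem discrete_sobolev (L : ℝ) (hL : 0 < L) (K : ℕ) (hK : 1 ≤ K) (Δx : ℝ)
    (hΔx : Δx = L / K) (v : ℤ → ℂ) (hv : ∀ k : ℤ, v (k + K) = v k) :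
    ∀ k : ℤ, ‖v k‖ ≤
      Real.sqrt 2 * max (Real.sqrt L) (1 / Real.sqrt L) *
        Real.sqrt (Δx * ∑ j ∈ Finset.range K, ‖v ((j : ℤ) + 1)‖ ^ 2
          + Δx * ∑ j ∈ Finset.range K,
              ‖(v ((j : ℤ) + 1 + 1) - v ((j : ℤ) + 1)) / (Δx : ℂ)‖ ^ 2) := by
  intro k
  have hKpos : 0 < K := hK
  have hKR : (0:ℝ) < K := by exact_mod_cast hKpos
  have hΔ : 0 < Δx := by rw [hΔx]; positivity
  -- periodicity in both directions
  have hper : ∀ (a : ℤ) (n : ℤ), v (a + n * K) = v a := by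
    intro a n
    induction n using Int.induction_on with
    | zero => simp
    | succ n ih =>
        have h1 := hv (a + (n:ℤ) * K)
        rw [show a + ((n:ℤ)+1) * K = a + (n:ℤ)*K + K by ring, h1, ih]
    | pred n ih =>
        have h1 := hv (a + (-(n:ℤ) - 1) * K)
        rw [show a + (-(n:ℤ) - 1) * K + K = a + (-(n:ℤ)) * K by ring] at h1
        exact h1.symm.trans ih
  have hdvd : ∀ a b : ℤ, (K:ℤ) ∣ b - a → v b = v a := by
    rintro a b ⟨c, hc⟩
    have hb : b = a + c * K := by linarith
    rw [hb, hper]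
  -- index j0 in range K with v k = v (j0+1)
  have hKz : (K:ℤ) ≠ 0 := by exact_mod_cast hKpos.ne'
  have hmn : 0 ≤ (k-1) % K := Int.emod_nonneg _ hKz
  have hml : (k-1) % K < K := Int.emod_lt_of_pos _ (by exact_mod_cast hKpos)
  set j0 : ℕ := ((k - 1) % K).toNat with hj0
  have hj0c : (j0:ℤ) = (k-1) % K := Int.toNat_of_nonneg hmn
  have hj0K : j0 < K := by omega
  have hvk : v k = v ((j0:ℤ) + 1) := by
    have hd : (K:ℤ) ∣ k - ((j0:ℤ)+1) := ⟨(k-1)/K, by rw [hj0c, Int.emod_def]; ring⟩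
    exact hdvd _ _ hd
  -- notation
  set f : ℕ → ℝ := fun j => ‖v ((j:ℤ) + 1)‖ with hf
  set d : ℕ → ℝ := fun j => ‖v ((j:ℤ) + 1 + 1) - v ((j:ℤ) + 1)‖ with hd
  have hfnn : ∀ j, 0 ≤ f j := fun j => norm_nonneg _
  have hdnn : ∀ j, 0 ≤ d j := fun j => norm_nonneg _
  set S := ∑ j ∈ Finset.range K, f j ^ 2 with hS
  set D := ∑ j ∈ Finset.range K, d j ^ 2 with hD
  have hSnn : 0 ≤ S := Finset.sum_nonneg fun j _ => sq_nonneg _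
  have hDnn : 0 ≤ D := Finset.sum_nonneg fun j _ => sq_nonneg _
  have hfK0 : f K = f 0 := by
    show ‖v ((K:ℤ) + 1)‖ = ‖v ((0:ℤ) + 1)‖
    rw [show ((K:ℤ)+1) = 1 + (K:ℤ) by ring, hv 1]
    norm_num
  have hshift : ∑ j ∈ Finset.range K, f (j+1) ^ 2 = S := by
    have h1 := Finset.sum_range_succ (fun j => f j ^ 2) K
    have h2 := Finset.sum_range_succ' (fun j => f j ^ 2) K
    rw [hfK0] at h1
    rw [hS]
    linarith [h1.symm.trans h2]
  -- minimum
  obtain ⟨m, hmK, hmin⟩ := Finset.exists_min_image (Finset.range K) f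
    ⟨0, Finset.mem_range.mpr hKpos⟩
  have hmS : (K:ℝ) * f m ^ 2 ≤ S := by
    calc (K:ℝ) * f m ^ 2 = ∑ _j ∈ Finset.range K, f m ^ 2 := by
          rw [Finset.sum_const, Finset.card_range, nsmul_eq_mul]
      _ ≤ S := Finset.sum_le_sum fun j hj => pow_le_pow_left₀ (hfnn m) (hmin j hj) 2
  -- telescoping bound
  set G := ∑ j ∈ Finset.range K, |f (j+1) ^ 2 - f j ^ 2| with hG
  have hGnn : 0 ≤ G := Finset.sum_nonneg fun j _ => abs_nonneg _
  have tele : ∀ p q : ℕ, p ≤ q →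
      ∑ j ∈ Finset.Ico p q, (f (j+1) ^ 2 - f j ^ 2) = f q ^ 2 - f p ^ 2 := by
    intro p q hpq
    rw [Finset.sum_Ico_eq_sub _ hpq, Finset.sum_range_sub (fun j => f j ^ 2),
      Finset.sum_range_sub (fun j => f j ^ 2)]
    ring
  have key : ∀ (g : ℕ → ℝ) (p q : ℕ), q ≤ K → (∀ j, g j ≤ |f (j+1) ^ 2 - f j ^ 2|) →
      ∑ j ∈ Finset.Ico p q, g j ≤ G := by
    intro g p q hq hg
    calc ∑ j ∈ Finset.Ico p q, g j ≤ ∑ j ∈ Finset.Ico p q, |f (j+1) ^ 2 - f j ^ 2| :=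
          Finset.sum_le_sum fun j _ => hg j
      _ ≤ G := Finset.sum_le_sum_of_subset_of_nonneg
          (by intro x hx; simp only [Finset.mem_Ico, Finset.mem_range] at hx ⊢; omega)
          (fun j _ _ => abs_nonneg _)
  have htel : f j0 ^ 2 ≤ f m ^ 2 + G := by
    rcases le_total m j0 with h | h
    · have h1 := key (fun j => f (j+1) ^ 2 - f j ^ 2) m j0 hj0K.le (fun j => le_abs_self _)
      rw [tele m j0 h] at h1
      linarith
    · have h1 := key (fun j => f j ^ 2 - f (j+1) ^ 2) j0 m (Finset.mem_range.mp hmK).le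
        (fun j => by rw [abs_sub_comm]; exact le_abs_self _)
      have h2 : ∑ j ∈ Finset.Ico j0 m, (f j ^ 2 - f (j+1) ^ 2)
          = -(f m ^ 2 - f j0 ^ 2) := by
        rw [← tele j0 m h, ← Finset.sum_neg_distrib]
        exact Finset.sum_congr rfl fun j _ => by ring
      rw [h2] at h1
      linarith
  -- per-term bound on G
  have hterm : ∀ j : ℕ, |f (j+1) ^ 2 - f j ^ 2| ≤ d j * (f (j+1) + f j) := by
    intro j
    have hc : f (j+1) = ‖v ((j:ℤ) + 1 + 1)‖ := by
      show ‖v (((j+1:ℕ):ℤ) + 1)‖ = _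
      push_cast
      ring_nf
    have h1 : |f (j+1) - f j| ≤ d j := by
      rw [hc]
      exact abs_norm_sub_norm_le _ _
    have h2 : f (j+1) ^ 2 - f j ^ 2 = (f (j+1) - f j) * (f (j+1) + f j) := by ring
    rw [h2, abs_mul, abs_of_nonneg (add_nonneg (hfnn _) (hfnn _))]
    exact mul_le_mul_of_nonneg_right h1 (add_nonneg (hfnn _) (hfnn _))
  -- Cauchy-Schwarz
  have hC4 : ∑ j ∈ Finset.range K, (f (j+1) + f j) ^ 2 ≤ 4 * S := by
    have h1 : ∀ j ∈ Finset.range K, (f (j+1) + f j) ^ 2 ≤ 2 * f (j+1) ^ 2 + 2 * f j ^ 2 :=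
      fun j _ => by nlinarith [sq_nonneg (f (j+1) - f j)]
    calc ∑ j ∈ Finset.range K, (f (j+1) + f j) ^ 2
        ≤ ∑ j ∈ Finset.range K, (2 * f (j+1) ^ 2 + 2 * f j ^ 2) := Finset.sum_le_sum h1
      _ = 4 * S := by rw [Finset.sum_add_distrib, ← Finset.mul_sum, ← Finset.mul_sum, hshift]; ring
  have hGb : G ≤ 2 * Real.sqrt D * Real.sqrt S := by
    have h0 : G ≤ ∑ j ∈ Finset.range K, d j * (f (j+1) + f j) :=
      Finset.sum_le_sum fun j _ => hterm j
    have hcs := Finset.sum_mul_sq_le_sq_mul_sq (Finset.range K) d (fun j => f (j+1) + f j)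
    have hnn : 0 ≤ ∑ j ∈ Finset.range K, d j * (f (j+1) + f j) :=
      Finset.sum_nonneg fun j _ => mul_nonneg (hdnn j) (add_nonneg (hfnn _) (hfnn _))
    have h2 : ∑ j ∈ Finset.range K, d j * (f (j+1) + f j) ≤ Real.sqrt (D * (4 * S)) := by
      rw [show ∑ j ∈ Finset.range K, d j * (f (j+1) + f j)
          = Real.sqrt ((∑ j ∈ Finset.range K, d j * (f (j+1) + f j)) ^ 2) from
        (Real.sqrt_sq hnn).symm]
      apply Real.sqrt_le_sqrt
      calc (∑ j ∈ Finset.range K, d j * (f (j+1) + f j)) ^ 2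
          ≤ D * ∑ j ∈ Finset.range K, (f (j+1) + f j) ^ 2 := hcs
        _ ≤ D * (4 * S) := mul_le_mul_of_nonneg_left hC4 hDnn
    have h3 : Real.sqrt (D * (4 * S)) = 2 * Real.sqrt D * Real.sqrt S := by
      rw [show D * (4 * S) = 4 * (D * S) by ring, Real.sqrt_mul (by norm_num : (0:ℝ) ≤ 4),
        Real.sqrt_mul hDnn, show (4:ℝ) = 2 ^ 2 by norm_num, Real.sqrt_sq (by norm_num : (0:ℝ) ≤ 2)]
      ring
    linarith [h0, h2.trans_eq h3]
  -- pass to A, B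
  set A := Δx * S with hA
  set B := D / Δx with hB
  have hAnn : 0 ≤ A := mul_nonneg hΔ.le hSnn
  have hBnn : 0 ≤ B := div_nonneg hDnn hΔ.le
  have hDS : Real.sqrt D * Real.sqrt S = Real.sqrt A * Real.sqrt B := by
    rw [← Real.sqrt_mul hDnn, ← Real.sqrt_mul hAnn]
    congr 1
    rw [hA, hB]
    field_simp
  have hsq : 2 * (Real.sqrt A * Real.sqrt B) ≤ A + B := by
    nlinarith [sq_nonneg (Real.sqrt A - Real.sqrt B), Real.sq_sqrt hAnn, Real.sq_sqrt hBnn]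
  have hmS' : f m ^ 2 ≤ A / L := by
    have hKL : Δx * K = L := by rw [hΔx]; field_simp
    have : A / L = S / K := by
      rw [hA, ← hKL]
      field_simp
    rw [this]
    rw [le_div_iff₀ hKR]
    linarith [hmS]
  have hmain : f j0 ^ 2 ≤ A / L + (A + B) := by
    have := htel
    have hG2 : G ≤ A + B := by
      rw [mul_assoc, hDS] at hGb
      linarith
    linarith
  -- the max factor
  set M := max (Real.sqrt L) (1 / Real.sqrt L) with hM
  have hMnn : 0 ≤ M := le_trans (Real.sqrt_nonneg L) (le_max_left _ _)
  have hM2 : M ^ 2 = max L (1 / L) := by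
    have e1 : Real.sqrt L ^ 2 = L := Real.sq_sqrt hL.le
    have hsp : 0 < Real.sqrt L := Real.sqrt_pos.mpr hL
    have e2 : (1 / Real.sqrt L) ^ 2 = 1 / L := by rw [div_pow, one_pow, e1]
    rcases le_total L 1 with h | h
    · have h1 : Real.sqrt L ≤ 1 / Real.sqrt L := by
        rw [le_div_iff₀ hsp, Real.mul_self_sqrt hL.le]; exact h
      have h2 : L ≤ 1 / L := by
        rw [le_div_iff₀ hL]
        calc L * L ≤ 1 * 1 := mul_le_mul h h hL.le zero_le_one
          _ = 1 := one_mul 1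
      rw [hM, max_eq_right h1, e2, max_eq_right h2]
    · have h1 : 1 / Real.sqrt L ≤ Real.sqrt L := by
        rw [div_le_iff₀ hsp, Real.mul_self_sqrt hL.le]; exact h
      have h2 : 1 / L ≤ L := by
        rw [div_le_iff₀ hL]
        calc (1:ℝ) = 1 * 1 := (one_mul 1).symm
          _ ≤ L * L := mul_le_mul h h zero_le_one (by linarith)
      rw [hM, max_eq_left h1, e1, max_eq_left h2]
  have hM2ge1 : 1 ≤ max L (1 / L) := by
    rcases le_total L 1 with h | h
    · exact le_trans (by rw [le_div_iff₀ hL]; linarith) (le_max_right _ _)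
    · exact le_trans h (le_max_left _ _)
  have hM2geL : 1 / L ≤ max L (1 / L) := le_max_right _ _
  have hfinal : f j0 ^ 2 ≤ 2 * M ^ 2 * (A + B) := by
    rw [hM2]
    have h1 : A / L ≤ max L (1/L) * (A + B) := by
      have : A / L = A * (1 / L) := by ring
      rw [this]
      calc A * (1/L) ≤ A * max L (1/L) := mul_le_mul_of_nonneg_left hM2geL hAnn
        _ ≤ (A + B) * max L (1/L) := mul_le_mul_of_nonneg_right (by linarith) (by linarith)
        _ = max L (1/L) * (A + B) := by ring
    have h2 : A + B ≤ max L (1/L) * (A + B) :=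
      le_mul_of_one_le_left (by linarith) hM2ge1
    linarith
  -- conclude
  have hgoal1 : ∑ j ∈ Finset.range K, ‖v ((j:ℤ) + 1)‖ ^ 2 = S :=
    Finset.sum_congr rfl fun j _ => rfl
  have hgoal2 : ∑ j ∈ Finset.range K,
      ‖(v ((j:ℤ) + 1 + 1) - v ((j:ℤ) + 1)) / (Δx:ℂ)‖ ^ 2 = D / Δx ^ 2 := by
    rw [hD, Finset.sum_div]
    refine Finset.sum_congr rfl fun j _ => ?_
    rw [norm_div, Complex.norm_of_nonneg hΔ.le, div_pow]
  have hAB : A + Δx * (D / Δx ^ 2) = A + B := by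
    rw [hB]
    congr 1
    field_simp
  rw [hvk]
  have hlhs : ‖v ((j0:ℤ) + 1)‖ = f j0 := rfl
  rw [hlhs, hgoal2, hAB]
  calc f j0 = Real.sqrt (f j0 ^ 2) := (Real.sqrt_sq (hfnn j0)).symm
    _ ≤ Real.sqrt (2 * M ^ 2 * (A + B)) := Real.sqrt_le_sqrt hfinal
    _ = Real.sqrt 2 * M * Real.sqrt (A + B) := by
        rw [Real.sqrt_mul (by positivity), Real.sqrt_mul (by norm_num : (0:ℝ) ≤ 2),
          Real.sqrt_sq hMnn]
end

section
/- For the DVDM scheme for the Zakharov equations, the discrete norm is conserved: if (E^(m), N^(m), V^(m)) and (E^(m+1), N^(m+1), V^(m+1)) are K-periodic sequences satisfying i·δ⁺ₜE^(m)_k = -δ⁽²⁾ₓ μ⁺ₜE^(m)_k + (μ⁺ₜN^(m)_k)(μ⁺ₜE^(m)_k) for all k (with N real-valued), then ‖E^(m+1)‖² = ‖E^(m)‖², where ‖E‖² = Δx Σ_{k=1}^K |E_k|². -/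
private lemma dvdm_sum_shift {M : Type*} [AddCommMonoid M] (K : ℕ) (hK : 1 ≤ K) (f : ℤ → M)
    (hf : ∀ k : ℤ, f (k + K) = f k) :
    ∑ k ∈ Finset.range K, f ((k:ℤ) + 1) = ∑ k ∈ Finset.range K, f (k:ℤ) := by
  obtain ⟨n, rfl⟩ := Nat.exists_eq_add_of_le hK
  rw [add_comm 1 n, Finset.sum_range_succ, Finset.sum_range_succ']
  rw [show ((n:ℤ) + 1 : ℤ) = 0 + ((1 + n : ℕ) : ℤ) by push_cast; ring, hf 0]
  simp [add_comm]

private lemma dvdm_lem1 (a b : ℂ) (t : ℝ) (ht : t ≠ 0) :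
    (Complex.I * ((a - b) / (t:ℂ)) * (starRingEnd ℂ) (a + b)).im
      = (‖a‖ ^ 2 - ‖b‖ ^ 2) / t := by
  simp only [Complex.sq_norm, Complex.normSq_apply, Complex.mul_im, Complex.mul_re,
    Complex.div_re, Complex.div_im, Complex.normSq_apply, Complex.I_re, Complex.I_im,
    Complex.conj_re, Complex.conj_im, Complex.add_re, Complex.add_im, Complex.sub_re,
    Complex.sub_im, Complex.ofReal_re, Complex.ofReal_im]
  field_simp
  ring

private lemma dvdm_lem2 (c d e : ℂ) (x r : ℝ) (hx : x ≠ 0) :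
    ((-((c / 2 - 2 * (d / 2) + e / 2) / ((x:ℂ)^2)) + (r:ℂ) * (d / 2)) * (starRingEnd ℂ) d).im
      = -(((c * (starRingEnd ℂ) d).im + (e * (starRingEnd ℂ) d).im) / (2 * x^2)) := by
  rw [← Complex.ofReal_pow]
  simp only [Complex.mul_im, Complex.mul_re, Complex.div_re, Complex.div_im,
    Complex.normSq_apply, Complex.conj_re, Complex.conj_im, Complex.add_re, Complex.add_im,
    Complex.sub_re, Complex.sub_im, Complex.neg_re, Complex.neg_im, Complex.ofReal_re,
    Complex.ofReal_im, Complex.re_ofNat, Complex.im_ofNat]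
  have h2 : x^2 ≠ 0 := pow_ne_zero 2 hx
  field_simp
  ring

private lemma dvdm_lem3 (z w : ℂ) : (z * (starRingEnd ℂ) w).im = -((w * (starRingEnd ℂ) z).im) := by
  simp only [Complex.mul_im, Complex.conj_re, Complex.conj_im]
  ring

theorem dvdm_norm_conservation (K : ℕ) (hK : 1 ≤ K) (Δt Δx : ℝ) (hΔt : 0 < Δt)
    (hΔx : 0 < Δx) (Em Em1 : ℤ → ℂ) (Nm Nm1 : ℤ → ℝ)
    (hEm : ∀ k : ℤ, Em (k + K) = Em k) (hEm1 : ∀ k : ℤ, Em1 (k + K) = Em1 k)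
    (hNm : ∀ k : ℤ, Nm (k + K) = Nm k) (hNm1 : ∀ k : ℤ, Nm1 (k + K) = Nm1 k)
    (hscheme : ∀ k : ℤ,
      Complex.I * ((Em1 k - Em k) / (Δt : ℂ))
        = -(((Em1 (k + 1) + Em (k + 1)) / 2 - 2 * ((Em1 k + Em k) / 2)
              + (Em1 (k - 1) + Em (k - 1)) / 2) / ((Δx : ℂ) ^ 2))
          + (((Nm1 k + Nm k) / 2 : ℝ) : ℂ) * ((Em1 k + Em k) / 2)) :
    Δx * ∑ k ∈ Finset.range K, ‖Em1 ((k : ℤ) + 1)‖ ^ 2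
      = Δx * ∑ k ∈ Finset.range K, ‖Em ((k : ℤ) + 1)‖ ^ 2 := by
  have hΔt0 : Δt ≠ 0 := ne_of_gt hΔt
  have hΔx0 : Δx ≠ 0 := ne_of_gt hΔx
  set S : ℤ → ℂ := fun k => Em1 k + Em k with hS
  have hSper : ∀ k : ℤ, S (k + K) = S k := fun k => by simp only [hS, hEm k, hEm1 k]
  set g : ℤ → ℝ := fun k => (S (k + 1) * (starRingEnd ℂ) (S k)).im with hg
  have hgper : ∀ k : ℤ, g (k + K) = g k := fun k => by
    simp only [hg]
    rw [show k + (K:ℤ) + 1 = (k + 1) + K by ring, hSper, hSper]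
  -- pointwise identity
  have key : ∀ k : ℤ,
      (‖Em1 k‖ ^ 2 - ‖Em k‖ ^ 2) / Δt
        = -((g k + -(g (k - 1))) / (2 * Δx ^ 2)) := by
    intro k
    have h1 : (Complex.I * ((Em1 k - Em k) / (Δt:ℂ)) * (starRingEnd ℂ) (S k)).im
        = ((-((S (k+1) / 2 - 2 * (S k / 2) + S (k-1) / 2) / ((Δx:ℂ)^2))
            + (((Nm1 k + Nm k) / 2 : ℝ) : ℂ) * (S k / 2)) * (starRingEnd ℂ) (S k)).im := by
      rw [hscheme k]
    rw [dvdm_lem1 _ _ _ hΔt0, dvdm_lem2 _ _ _ _ _ hΔx0] at h1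
    rw [h1, hg]
    have h3 : (S (k - 1) * (starRingEnd ℂ) (S k)).im
        = -((S (k - 1 + 1) * (starRingEnd ℂ) (S (k - 1))).im) := by
      rw [show k - 1 + 1 = k by ring, dvdm_lem3]
    rw [h3]
  -- sum the pointwise identity
  have hsum : ∑ k ∈ Finset.range K, (‖Em1 (k:ℤ)‖ ^ 2 - ‖Em (k:ℤ)‖ ^ 2) / Δt
      = ∑ k ∈ Finset.range K, -((g (k:ℤ) + -(g ((k:ℤ) - 1))) / (2 * Δx ^ 2)) :=
    Finset.sum_congr rfl fun k _ => key (k:ℤ)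
  -- the right-hand side vanishes by periodic summation by parts
  have hshift : ∑ k ∈ Finset.range K, g (k:ℤ) = ∑ k ∈ Finset.range K, g ((k:ℤ) - 1) := by
    have hper' : ∀ k : ℤ, (fun j => g (j - 1)) (k + K) = (fun j => g (j - 1)) k := by
      intro k
      simp only
      rw [show k + (K:ℤ) - 1 = (k - 1) + K by ring, hgper]
    have := dvdm_sum_shift K hK (fun j => g (j - 1)) hper'
    simpa using this
  have hzero : ∑ k ∈ Finset.range K, -((g (k:ℤ) + -(g ((k:ℤ) - 1))) / (2 * Δx ^ 2)) = 0 := by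
    have e1 : ∀ k ∈ Finset.range K, -((g (k:ℤ) + -(g ((k:ℤ) - 1))) / (2 * Δx ^ 2))
        = (g (k:ℤ) + -(g ((k:ℤ) - 1))) * (-(1 / (2 * Δx ^ 2))) := fun k _ => by ring
    rw [Finset.sum_congr rfl e1, ← Finset.sum_mul, Finset.sum_add_distrib,
      Finset.sum_neg_distrib, hshift]
    ring
  rw [hzero] at hsum
  rw [← Finset.sum_div, div_eq_zero_iff] at hsum
  have hsum0 : ∑ k ∈ Finset.range K, (‖Em1 (k:ℤ)‖ ^ 2 - ‖Em (k:ℤ)‖ ^ 2) = 0 := by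
    rcases hsum with h | h
    · exact h
    · exact absurd h hΔt0
  rw [Finset.sum_sub_distrib, sub_eq_zero] at hsum0
  -- shift the window and conclude
  have s1 : ∑ k ∈ Finset.range K, ‖Em1 ((k:ℤ) + 1)‖ ^ 2
      = ∑ k ∈ Finset.range K, ‖Em1 (k:ℤ)‖ ^ 2 :=
    dvdm_sum_shift K hK (fun j => ‖Em1 j‖ ^ 2) (fun k => by simp only [hEm1 k])
  have s2 : ∑ k ∈ Finset.range K, ‖Em ((k:ℤ) + 1)‖ ^ 2
      = ∑ k ∈ Finset.range K, ‖Em (k:ℤ)‖ ^ 2 :=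
    dvdm_sum_shift K hK (fun j => ‖Em j‖ ^ 2) (fun k => by simp only [hEm k])
  rw [s1, s2, hsum0]
end

section
/- For the DVDM scheme for the Zakharov equations, the discrete energy E_D^(m) := ‖δ⁺ₓE^(m)‖² + (1/2)(‖N^(m)‖² + ‖δ⁺ₓV^(m)‖²) + ⟨N^(m), |E^(m)|²⟩ is conserved: E_D^(m+1) = E_D^(m) whenever (E^(m), N^(m), V^(m)) and (E^(m+1), N^(m+1), V^(m+1)) are K-periodic and satisfy all three DVDM equations. -/
open Finset Complex

lemma shift_sum {M : Type*} [AddCommGroup M] (K : ℕ) (f : ℤ → M)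
    (hf : ∀ k : ℤ, f (k + K) = f k) :
    ∑ k ∈ range K, f ((k : ℤ) + 1 + 1) = ∑ k ∈ range K, f ((k : ℤ) + 1) := by
  have h1 : ∑ k ∈ range K, f ((k : ℤ) + 1 + 1)
      = ∑ k ∈ range K, (fun k : ℕ => f ((k : ℤ) + 1)) (k + 1) := by
    refine sum_congr rfl fun k _ => ?_
    push_cast; ring_nf
  have h2 := Finset.sum_range_succ' (fun k : ℕ => f ((k : ℤ) + 1)) K
  have h3 := Finset.sum_range_succ (fun k : ℕ => f ((k : ℤ) + 1)) K
  have h4 : f ((K : ℤ) + 1) = f ((0 : ℤ) + 1) := by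
    have := hf 1
    simpa [add_comm] using this
  rw [h1]
  have := h2.symm.trans h3
  simp only [h4] at this
  exact add_right_cancel this

lemma sbp {R : Type*} [CommRing R] (K : ℕ) (f g : ℤ → R)
    (hf : ∀ k : ℤ, f (k + K) = f k) (hg : ∀ k : ℤ, g (k + K) = g k) :
    ∑ k ∈ range K, (f ((k:ℤ)+1+1) - 2 * f ((k:ℤ)+1) + f ((k:ℤ)+1-1)) * g ((k:ℤ)+1)
      = -∑ k ∈ range K, (f ((k:ℤ)+1+1) - f ((k:ℤ)+1)) * (g ((k:ℤ)+1+1) - g ((k:ℤ)+1)) := by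
  have key := shift_sum K (fun j => (f j - f (j-1)) * g j) (by
    intro k
    simp only [show ∀ k : ℤ, k + (K:ℤ) - 1 = (k-1) + K from fun k => by ring, hf, hg])
  simp only [add_sub_cancel_right] at key
  have lhs_split : ∑ k ∈ range K, (f ((k:ℤ)+1+1) - 2 * f ((k:ℤ)+1) + f ((k:ℤ)+1-1)) * g ((k:ℤ)+1)
      = ∑ k ∈ range K, (f ((k:ℤ)+1+1) - f ((k:ℤ)+1)) * g ((k:ℤ)+1)
        - ∑ k ∈ range K, (f ((k:ℤ)+1) - f ((k:ℤ)+1-1)) * g ((k:ℤ)+1) := by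
    rw [← Finset.sum_sub_distrib]
    refine sum_congr rfl fun k _ => ?_; ring
  simp only [add_sub_cancel_right] at lhs_split ⊢
  rw [lhs_split, ← key, ← Finset.sum_neg_distrib, ← Finset.sum_sub_distrib]
  refine sum_congr rfl fun k _ => ?_; ring

noncomputable def discreteEnergy (K : ℕ) (Δx : ℝ) (E : ℤ → ℂ) (N V : ℤ → ℝ) : ℝ :=
  Δx * ∑ k ∈ Finset.range K,
      ‖(E ((k : ℤ) + 1 + 1) - E ((k : ℤ) + 1)) / (Δx : ℂ)‖ ^ 2
    + (1 / 2) * (Δx * ∑ k ∈ Finset.range K, N ((k : ℤ) + 1) ^ 2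
      + Δx * ∑ k ∈ Finset.range K, ((V ((k : ℤ) + 1 + 1) - V ((k : ℤ) + 1)) / Δx) ^ 2)
    + Δx * ∑ k ∈ Finset.range K, N ((k : ℤ) + 1) * ‖E ((k : ℤ) + 1)‖ ^ 2

theorem dvdm_energy_conservation (K : ℕ) (hK : 1 ≤ K) (Δt Δx : ℝ) (hΔt : 0 < Δt)
    (hΔx : 0 < Δx) (Em Em1 : ℤ → ℂ) (Nm Nm1 Vm Vm1 : ℤ → ℝ)
    (hEm : ∀ k : ℤ, Em (k + K) = Em k) (hEm1 : ∀ k : ℤ, Em1 (k + K) = Em1 k)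
    (hNm : ∀ k : ℤ, Nm (k + K) = Nm k) (hNm1 : ∀ k : ℤ, Nm1 (k + K) = Nm1 k)
    (hVm : ∀ k : ℤ, Vm (k + K) = Vm k) (hVm1 : ∀ k : ℤ, Vm1 (k + K) = Vm1 k)
    (hscheme1 : ∀ k : ℤ,
      Complex.I * ((Em1 k - Em k) / (Δt : ℂ))
        = -(((Em1 (k + 1) + Em (k + 1)) / 2 - 2 * ((Em1 k + Em k) / 2)
              + (Em1 (k - 1) + Em (k - 1)) / 2) / ((Δx : ℂ) ^ 2))
          + (((Nm1 k + Nm k) / 2 : ℝ) : ℂ) * ((Em1 k + Em k) / 2))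
    (hscheme2 : ∀ k : ℤ,
      (Nm1 k - Nm k) / Δt
        = ((Vm1 (k + 1) + Vm (k + 1)) / 2 - 2 * ((Vm1 k + Vm k) / 2)
            + (Vm1 (k - 1) + Vm (k - 1)) / 2) / Δx ^ 2)
    (hscheme3 : ∀ k : ℤ,
      (Vm1 k - Vm k) / Δt
        = (Nm1 k + Nm k) / 2
          + (‖Em1 k‖ ^ 2 + ‖Em k‖ ^ 2) / 2) :
    discreteEnergy K Δx Em1 Nm1 Vm1 = discreteEnergy K Δx Em Nm Vm := by
  have hxne : Δx ≠ 0 := hΔx.ne'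
  have htne : Δt ≠ 0 := hΔt.ne'
  have hx : ((Δx : ℂ)) ≠ 0 := by exact_mod_cast hxne
  have ht : ((Δt : ℂ)) ≠ 0 := by exact_mod_cast htne
  -- pointwise consequence of scheme 1
  have P1 : ∀ j : ℤ,
      (Nm1 j + Nm j) * (Complex.normSq (Em1 j) - Complex.normSq (Em j)) * Δx ^ 2
        = 2 * ((((Em1 (j+1) + Em (j+1)) - 2 * (Em1 j + Em j) + (Em1 (j-1) + Em (j-1)))
            * (starRingEnd ℂ) (Em1 j - Em j)).re) := by
    intro j
    have h := hscheme1 j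
    field_simp at h
    rw [show ((Δx:ℂ))^2 = ((Δx^2 : ℝ):ℂ) by push_cast; ring] at h
    have h_re := congrArg Complex.re h
    have h_im := congrArg Complex.im h
    simp only [Complex.mul_re, Complex.mul_im, Complex.add_re, Complex.add_im, Complex.sub_re,
      Complex.sub_im, Complex.neg_re, Complex.neg_im, Complex.I_re, Complex.I_im,
      Complex.ofReal_re, Complex.ofReal_im, Complex.re_ofNat, Complex.im_ofNat] at h_re h_im
    refine mul_right_cancel₀ htne ?_
    simp only [Complex.normSq_apply, Complex.mul_re, Complex.sub_re, Complex.sub_im,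
      Complex.add_re, Complex.add_im, Complex.mul_im, Complex.conj_re, Complex.conj_im,
      Complex.re_ofNat, Complex.im_ofNat]
    linear_combination ((-2 : ℝ) * ((Em1 j).re - (Em j).re)) * h_re
      + ((-2 : ℝ) * ((Em1 j).im - (Em j).im)) * h_im
  -- pointwise consequence of schemes 2 and 3
  have P2 : ∀ j : ℤ,
      (Nm1 j ^ 2 - Nm j ^ 2) * Δx ^ 2
        = ((Vm1 (j+1) + Vm (j+1)) - 2 * (Vm1 j + Vm j) + (Vm1 (j-1) + Vm (j-1)))
            * (Vm1 j - Vm j)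
          - (Nm1 j - Nm j) * Δx ^ 2
            * (Complex.normSq (Em1 j) + Complex.normSq (Em j)) := by
    intro j
    have h2 := hscheme2 j
    have h3 := hscheme3 j
    rw [Complex.sq_norm, Complex.sq_norm] at h3
    field_simp at h2 h3
    refine mul_right_cancel₀ htne ?_
    linear_combination (Vm1 j - Vm j) * h2 - ((Nm1 j - Nm j) * Δx ^ 2) * h3
  -- summation by parts for the E-equation
  have hfE : ∀ k : ℤ, Em1 (k + K) + Em (k + K) = Em1 k + Em k := by
    intro k; rw [hEm1, hEm]
  have hgE : ∀ k : ℤ, (starRingEnd ℂ) (Em1 (k + K) - Em (k + K))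
      = (starRingEnd ℂ) (Em1 k - Em k) := by
    intro k; rw [hEm1, hEm]
  have hsbpC := sbp K (fun j => Em1 j + Em j)
    (fun j => (starRingEnd ℂ) (Em1 j - Em j)) hfE hgE
  -- SA
  have SA : (∑ k ∈ range K, Complex.normSq (Em1 ((k:ℤ)+1+1) - Em1 ((k:ℤ)+1)))
        - ∑ k ∈ range K, Complex.normSq (Em ((k:ℤ)+1+1) - Em ((k:ℤ)+1))
      = -(Δx^2/2) * ∑ k ∈ range K,
          (Nm1 ((k:ℤ)+1) + Nm ((k:ℤ)+1))
            * (Complex.normSq (Em1 ((k:ℤ)+1)) - Complex.normSq (Em ((k:ℤ)+1))) := by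
    have h1 : ∑ k ∈ range K, (Nm1 ((k:ℤ)+1) + Nm ((k:ℤ)+1))
          * (Complex.normSq (Em1 ((k:ℤ)+1)) - Complex.normSq (Em ((k:ℤ)+1))) * Δx ^ 2
        = ∑ k ∈ range K, 2 * ((((Em1 ((k:ℤ)+1+1) + Em ((k:ℤ)+1+1))
              - 2 * (Em1 ((k:ℤ)+1) + Em ((k:ℤ)+1)) + (Em1 ((k:ℤ)+1-1) + Em ((k:ℤ)+1-1)))
            * (starRingEnd ℂ) (Em1 ((k:ℤ)+1) - Em ((k:ℤ)+1))).re) :=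
      sum_congr rfl fun k _ => P1 _
    rw [← Finset.mul_sum, ← Complex.re_sum, hsbpC] at h1
    rw [Complex.neg_re, Complex.re_sum] at h1
    have h2 : ∑ k ∈ range K, (((Em1 ((k:ℤ)+1+1) + Em ((k:ℤ)+1+1)) - (Em1 ((k:ℤ)+1) + Em ((k:ℤ)+1)))
          * ((starRingEnd ℂ) (Em1 ((k:ℤ)+1+1) - Em ((k:ℤ)+1+1))
             - (starRingEnd ℂ) (Em1 ((k:ℤ)+1) - Em ((k:ℤ)+1)))).re
        = ∑ k ∈ range K, (Complex.normSq (Em1 ((k:ℤ)+1+1) - Em1 ((k:ℤ)+1))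
            - Complex.normSq (Em ((k:ℤ)+1+1) - Em ((k:ℤ)+1))) := by
      refine sum_congr rfl fun k _ => ?_
      simp only [Complex.normSq_apply, Complex.mul_re, Complex.sub_re, Complex.sub_im,
        Complex.add_re, Complex.add_im, Complex.conj_re, Complex.conj_im]
      ring
    rw [h2, Finset.sum_sub_distrib, ← Finset.sum_mul] at h1
    linear_combination (1/2 : ℝ) * h1
  -- SB
  have hfV : ∀ k : ℤ, Vm1 (k + K) + Vm (k + K) = Vm1 k + Vm k := by
    intro k; rw [hVm1, hVm]
  have hgV : ∀ k : ℤ, Vm1 (k + K) - Vm (k + K) = Vm1 k - Vm k := by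
    intro k; rw [hVm1, hVm]
  have hsbpR := sbp K (fun j => Vm1 j + Vm j) (fun j => Vm1 j - Vm j) hfV hgV
  have SB : Δx^2 * ((∑ k ∈ range K, Nm1 ((k:ℤ)+1) ^ 2) - ∑ k ∈ range K, Nm ((k:ℤ)+1) ^ 2)
        + ((∑ k ∈ range K, (Vm1 ((k:ℤ)+1+1) - Vm1 ((k:ℤ)+1)) ^ 2)
           - ∑ k ∈ range K, (Vm ((k:ℤ)+1+1) - Vm ((k:ℤ)+1)) ^ 2)
      = -Δx^2 * ∑ k ∈ range K, (Nm1 ((k:ℤ)+1) - Nm ((k:ℤ)+1))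
          * (Complex.normSq (Em1 ((k:ℤ)+1)) + Complex.normSq (Em ((k:ℤ)+1))) := by
    have h1 : ∑ k ∈ range K, (Nm1 ((k:ℤ)+1) ^ 2 - Nm ((k:ℤ)+1) ^ 2) * Δx ^ 2
        = ∑ k ∈ range K, (((Vm1 ((k:ℤ)+1+1) + Vm ((k:ℤ)+1+1))
              - 2 * (Vm1 ((k:ℤ)+1) + Vm ((k:ℤ)+1)) + (Vm1 ((k:ℤ)+1-1) + Vm ((k:ℤ)+1-1)))
            * (Vm1 ((k:ℤ)+1) - Vm ((k:ℤ)+1))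
          - (Nm1 ((k:ℤ)+1) - Nm ((k:ℤ)+1)) * Δx ^ 2
            * (Complex.normSq (Em1 ((k:ℤ)+1)) + Complex.normSq (Em ((k:ℤ)+1)))) :=
      sum_congr rfl fun k _ => P2 _
    rw [Finset.sum_sub_distrib, hsbpR] at h1
    have h2 : ∑ k ∈ range K, ((Vm1 ((k:ℤ)+1+1) + Vm ((k:ℤ)+1+1)) - (Vm1 ((k:ℤ)+1) + Vm ((k:ℤ)+1)))
          * ((Vm1 ((k:ℤ)+1+1) - Vm ((k:ℤ)+1+1)) - (Vm1 ((k:ℤ)+1) - Vm ((k:ℤ)+1)))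
        = ∑ k ∈ range K, ((Vm1 ((k:ℤ)+1+1) - Vm1 ((k:ℤ)+1)) ^ 2
            - (Vm ((k:ℤ)+1+1) - Vm ((k:ℤ)+1)) ^ 2) := by
      refine sum_congr rfl fun k _ => ?_; ring
    rw [h2, Finset.sum_sub_distrib] at h1
    have h3 : ∑ k ∈ range K, (Nm1 ((k:ℤ)+1) ^ 2 - Nm ((k:ℤ)+1) ^ 2) * Δx ^ 2
        = Δx^2 * ((∑ k ∈ range K, Nm1 ((k:ℤ)+1) ^ 2) - ∑ k ∈ range K, Nm ((k:ℤ)+1) ^ 2) := by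
      rw [← Finset.sum_sub_distrib, Finset.mul_sum]
      exact sum_congr rfl fun k _ => by ring
    have h4 : ∑ k ∈ range K, (Nm1 ((k:ℤ)+1) - Nm ((k:ℤ)+1)) * Δx ^ 2
          * (Complex.normSq (Em1 ((k:ℤ)+1)) + Complex.normSq (Em ((k:ℤ)+1)))
        = Δx^2 * ∑ k ∈ range K, (Nm1 ((k:ℤ)+1) - Nm ((k:ℤ)+1))
          * (Complex.normSq (Em1 ((k:ℤ)+1)) + Complex.normSq (Em ((k:ℤ)+1))) := by
      rw [Finset.mul_sum]
      exact sum_congr rfl fun k _ => by ring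
    rw [h3, h4] at h1
    linear_combination h1
  -- SC
  have SC : 2 * ((∑ k ∈ range K, Nm1 ((k:ℤ)+1) * Complex.normSq (Em1 ((k:ℤ)+1)))
        - ∑ k ∈ range K, Nm ((k:ℤ)+1) * Complex.normSq (Em ((k:ℤ)+1)))
      = (∑ k ∈ range K, (Nm1 ((k:ℤ)+1) + Nm ((k:ℤ)+1))
            * (Complex.normSq (Em1 ((k:ℤ)+1)) - Complex.normSq (Em ((k:ℤ)+1))))
        + ∑ k ∈ range K, (Nm1 ((k:ℤ)+1) - Nm ((k:ℤ)+1))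
            * (Complex.normSq (Em1 ((k:ℤ)+1)) + Complex.normSq (Em ((k:ℤ)+1))) := by
    rw [← Finset.sum_sub_distrib, ← Finset.sum_add_distrib, Finset.mul_sum]
    exact sum_congr rfl fun k _ => by ring
  -- final assembly
  unfold discreteEnergy
  simp only [Complex.sq_norm, map_div₀, Complex.normSq_ofReal, div_pow]
  rw [← Finset.sum_div, ← Finset.sum_div, ← Finset.sum_div, ← Finset.sum_div]
  field_simp
  linear_combination 2 * SA + SB + (Δx^2) * SC
end
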